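/- Fix an integer n ≥ 1 and let (f_k) be defined by f_0 = 1 and f_k = (1 - 1/(2k)) f_{k-1} for k ≥ 1. For any vectors b, c ∈ ℝ^n satisfying the constraints Σ_{i=0}^{k} b_i * c_{k-i} = 1 for every 0 ≤ k < n, one has ‖b‖_2 · ‖c‖_2 ≥ Σ_{k=0}^{n-1} f_k^2. Moreover the choice b = c = (f_0, f_1, ..., f_{n-1}) satisfies the constraints and attains equality, so the minimum of ‖b‖_2 ‖c‖_2 over all feasible (b, c) equals Σ_{k=0}^{n-1} f_k^2. -/

import Mathlib

open Finset
set_option linter.unusedSectionVars false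

/-- Triangular double-sum reindexing along antidiagonals. -/
lemma tri_sum (N : ℕ) (F : ℕ → ℕ → ℝ) :
    ∑ j ∈ range N, ∑ l ∈ range (N - j), F j l
      = ∑ s ∈ range N, ∑ l ∈ range (s + 1), F (s - l) l := by
  induction N with
  | zero => simp
  | succ N ih =>
    have h1 : ∑ j ∈ range (N+1), ∑ l ∈ range (N+1-j), F j l
        = ∑ j ∈ range (N+1), (∑ l ∈ range (N-j), F j l + F j (N-j)) := by
      refine Finset.sum_congr rfl fun j hj => ?_
      have hjN : j ≤ N := by simpa [Nat.lt_succ_iff] using hj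
      rw [show N + 1 - j = (N - j) + 1 by omega, Finset.sum_range_succ]
    rw [h1, Finset.sum_add_distrib]
    have h2 : ∑ j ∈ range (N+1), ∑ l ∈ range (N-j), F j l
        = ∑ j ∈ range N, ∑ l ∈ range (N-j), F j l := by
      rw [Finset.sum_range_succ]; simp
    have h3 : ∑ j ∈ range (N+1), F j (N-j) = ∑ l ∈ range (N+1), F (N-l) l := by
      rw [← Finset.sum_range_reflect (fun l => F (N-l) l) (N+1)]
      refine Finset.sum_congr rfl fun j hj => ?_
      have hjN : j ≤ N := by simpa [Nat.lt_succ_iff] using hj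
      rw [show N + 1 - 1 - j = N - j from rfl, Nat.sub_sub_self hjN]
    rw [h2, h3, ih,
      Finset.sum_range_succ (fun s => ∑ l ∈ range (s + 1), F (s - l) l)]

section fhu_aux
variable (f : ℕ → ℝ) (hf0 : f 0 = 1)
  (hf : ∀ k : ℕ, 1 ≤ k → f k = (1 - 1 / (2 * (k : ℝ))) * f (k - 1))
include hf0 hf

lemma fhu_pos : ∀ k, 0 < f k := by
  intro k
  induction k with
  | zero => simp [hf0]
  | succ k ih =>
    rw [hf (k+1) (by omega)]
    have h1 : (0:ℝ) < 1 - 1 / (2 * ((k:ℝ)+1)) := by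
      rw [sub_pos, div_lt_one (by positivity)]
      have hk : (0:ℝ) ≤ (k:ℝ) := Nat.cast_nonneg k
      nlinarith
    simpa using mul_pos h1 ih

lemma fhu_mono : ∀ j k : ℕ, j ≤ k → f k ≤ f j := by
  have hstep : ∀ k : ℕ, f (k+1) ≤ f k := by
    intro k
    rw [hf (k+1) (by omega)]
    have h1 : 1 - 1 / (2 * ((k:ℝ)+1)) ≤ 1 := by
      have : (0:ℝ) ≤ 1 / (2 * ((k:ℝ)+1)) := by positivity
      linarith
    have := (fhu_pos f hf0 hf k).le
    simpa using mul_le_of_le_one_left this h1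
  intro j k hjk
  exact antitone_nat_of_succ_le hstep hjk

lemma fhu_rec : ∀ i : ℕ, 2 * ((i:ℝ)+1) * f (i+1) = (2*(i:ℝ)+1) * f i := by
  intro i
  have h := hf (i+1) (by omega)
  simp only [Nat.add_sub_cancel] at h
  rw [h]
  push_cast
  have e : (1 - 1 / (2 * ((i:ℝ)+1))) * (2*((i:ℝ)+1)) = 2*(i:ℝ)+1 := by
    have h2 : (2 * ((i:ℝ)+1)) ≠ 0 := by positivity
    field_simp
    ring
  linear_combination f i * e

/-- twice lemma: 2 ∑ i·fᵢf_{m-i} = m ∑ fᵢ f_{m-i} -/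
lemma fhu_twice (m : ℕ) :
    2 * ∑ i ∈ range (m+1), (i:ℝ) * (f i * f (m - i))
      = (m:ℝ) * ∑ i ∈ range (m+1), f i * f (m - i) := by
  have hrefl : ∑ i ∈ range (m+1), (i:ℝ) * (f i * f (m - i))
      = ∑ i ∈ range (m+1), ((m - i : ℕ):ℝ) * (f i * f (m - i)) := by
    rw [← Finset.sum_range_reflect (fun i => ((m - i : ℕ):ℝ) * (f i * f (m - i))) (m+1)]
    refine Finset.sum_congr rfl fun i hi => ?_
    have him : i ≤ m := by simpa [Nat.lt_succ_iff] using hi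
    rw [show m + 1 - 1 - i = m - i from rfl, Nat.sub_sub_self him]
    ring
  calc 2 * ∑ i ∈ range (m+1), (i:ℝ) * (f i * f (m - i))
      = ∑ i ∈ range (m+1), (i:ℝ) * (f i * f (m - i))
        + ∑ i ∈ range (m+1), ((m - i : ℕ):ℝ) * (f i * f (m - i)) := by
        rw [← hrefl]; ring
    _ = ∑ i ∈ range (m+1), (m:ℝ) * (f i * f (m - i)) := by
        rw [← Finset.sum_add_distrib]
        refine Finset.sum_congr rfl fun i hi => ?_
        have him : i ≤ m := by simpa [Nat.lt_succ_iff] using hi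
        have : (i:ℝ) + ((m - i : ℕ):ℝ) = (m:ℝ) := by
          rw [← Nat.cast_add]; congr 1; omega
        rw [← add_mul, this]
    _ = (m:ℝ) * ∑ i ∈ range (m+1), f i * f (m - i) := by rw [Finset.mul_sum]

lemma fhu_conv : ∀ k : ℕ, ∑ i ∈ range (k+1), f i * f (k - i) = 1 := by
  intro k
  induction k with
  | zero => simp [hf0]
  | succ k ih =>
    have hcancel : ((k:ℝ)+1) ≠ 0 := by positivity
    refine mul_left_cancel₀ hcancel ?_
    have step1 : ((k:ℝ)+1) * ∑ i ∈ range (k+2), f i * f (k+1-i)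
        = 2 * ∑ i ∈ range (k+2), (i:ℝ) * (f i * f (k+1-i)) := by
      have := fhu_twice f hf0 hf (k+1)
      push_cast at this ⊢
      linarith [this]
    have step2 : ∑ i ∈ range (k+2), (i:ℝ) * (f i * f (k+1-i))
        = ∑ i ∈ range (k+1), ((i:ℝ)+1) * (f (i+1) * f (k-i)) := by
      rw [Finset.sum_range_succ' (fun i => (i:ℝ) * (f i * f (k+1-i))) (k+1)]
      simp only [Nat.cast_zero, zero_mul, add_zero]
      push_cast
      rfl
    have step3 : 2 * ∑ i ∈ range (k+1), ((i:ℝ)+1) * (f (i+1) * f (k-i))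
        = ∑ i ∈ range (k+1), (2*(i:ℝ)+1) * (f i * f (k-i)) := by
      rw [Finset.mul_sum]
      refine Finset.sum_congr rfl fun i hi => ?_
      linear_combination f (k-i) * fhu_rec f hf0 hf i
    have step4 : ∑ i ∈ range (k+1), (2*(i:ℝ)+1) * (f i * f (k-i))
        = 2 * ∑ i ∈ range (k+1), (i:ℝ) * (f i * f (k-i))
          + ∑ i ∈ range (k+1), f i * f (k-i) := by
      rw [Finset.mul_sum, ← Finset.sum_add_distrib]
      refine Finset.sum_congr rfl fun i hi => ?_
      ring
    rw [step1, step2, step3, step4, fhu_twice f hf0 hf k, ih]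
    ring

end fhu_aux

noncomputable def fhu_g (f : ℕ → ℝ) : ℕ → ℝ := fun j => if j = 0 then 1 else f j - f (j - 1)

noncomputable def fhu_w (f : ℕ → ℝ) (n : ℕ) : ℕ → ℝ :=
  fun m => ∑ j ∈ range (n - m), fhu_g f j * f (m + j)

section fhu_aux2
variable (f : ℕ → ℝ) (hf0 : f 0 = 1)
  (hf : ∀ k : ℕ, 1 ≤ k → f k = (1 - 1 / (2 * (k : ℝ))) * f (k - 1))
include hf0 hf

lemma fhu_gsum : ∀ m : ℕ, ∑ j ∈ range (m+1), fhu_g f j = f m := by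
  intro m
  induction m with
  | zero => simp [fhu_g, hf0]
  | succ m ih =>
    rw [Finset.sum_range_succ, ih]
    have : fhu_g f (m+1) = f (m+1) - f m := by simp [fhu_g]
    rw [this]; ring

lemma fhu_gnonpos : ∀ j : ℕ, 1 ≤ j → fhu_g f j ≤ 0 := by
  intro j hj
  have : fhu_g f j = f j - f (j-1) := by
    simp only [fhu_g, if_neg (show j ≠ 0 by omega)]
  rw [this, sub_nonpos]
  exact fhu_mono f hf0 hf (j-1) j (by omega)

lemma fhu_gconv : ∀ k : ℕ, 1 ≤ k → ∑ i ∈ range (k+1), fhu_g f i * f (k - i) = 0 := by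
  intro k hk
  obtain ⟨m, rfl⟩ : ∃ m, k = m + 1 := ⟨k - 1, by omega⟩
  rw [Finset.sum_range_succ' (fun i => fhu_g f i * f (m + 1 - i)) (m+1)]
  have h0 : fhu_g f 0 * f (m+1-0) = f (m+1) := by simp [fhu_g]
  have h1 : ∑ i ∈ range (m+1), fhu_g f (i+1) * f (m+1-(i+1))
      = ∑ i ∈ range (m+1), f (i+1) * f (m-i) - ∑ i ∈ range (m+1), f i * f (m-i) := by
    rw [← Finset.sum_sub_distrib]
    refine Finset.sum_congr rfl fun i hi => ?_
    have hg : fhu_g f (i+1) = f (i+1) - f i := by simp [fhu_g]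
    rw [hg, show m + 1 - (i+1) = m - i by omega]
    ring
  have h2 : ∑ i ∈ range (m+1), f (i+1) * f (m-i) = 1 - f (m+1) := by
    have hc := fhu_conv f hf0 hf (m+1)
    rw [Finset.sum_range_succ' (fun i => f i * f (m + 1 - i)) (m+1)] at hc
    simp only [hf0, Nat.sub_zero, one_mul] at hc
    have he : ∀ i : ℕ, m + 1 - (i+1) = m - i := fun i => by omega
    simp only [he] at hc
    linarith
  rw [h0, h1, h2, fhu_conv f hf0 hf m]
  ring

lemma fhu_eigen (n : ℕ) : ∀ i : ℕ, i < n →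
    ∑ j ∈ range (n - i), fhu_w f n (i + j) * f j = f i := by
  intro i hi
  have hw : ∀ j, fhu_w f n (i + j) = ∑ l ∈ range (n - i - j), fhu_g f l * f (i + j + l) := by
    intro j
    simp only [fhu_w]
    rw [Nat.sub_sub]
  calc ∑ j ∈ range (n - i), fhu_w f n (i + j) * f j
      = ∑ j ∈ range (n - i), ∑ l ∈ range (n - i - j), fhu_g f l * f (i + j + l) * f j := by
        refine Finset.sum_congr rfl fun j hj => ?_
        rw [hw j, Finset.sum_mul]
    _ = ∑ s ∈ range (n - i), ∑ l ∈ range (s+1), fhu_g f l * f (i + (s - l) + l) * f (s - l) := by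
        exact tri_sum (n - i) (fun j l => fhu_g f l * f (i + j + l) * f j)
    _ = ∑ s ∈ range (n - i), f (i + s) * ∑ l ∈ range (s+1), fhu_g f l * f (s - l) := by
        refine Finset.sum_congr rfl fun s hs => ?_
        rw [Finset.mul_sum]
        refine Finset.sum_congr rfl fun l hl => ?_
        have hls : l ≤ s := by simpa [Nat.lt_succ_iff] using hl
        rw [show i + (s - l) + l = i + s by omega]
        ring
    _ = f i := by
        rw [Finset.sum_eq_single 0]
        · simp [fhu_g, hf0]
        · intro s hs hs0
          rw [fhu_gconv f hf0 hf s (by omega), mul_zero]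
        · intro h
          exact absurd (Finset.mem_range.mpr (by omega)) h

lemma fhu_wnonneg (n : ℕ) : ∀ m : ℕ, m < n → 0 ≤ fhu_w f n m := by
  intro m hm
  obtain ⟨a, ha⟩ : ∃ a, n - m = a + 1 := ⟨n - m - 1, by omega⟩
  have key : f m * f a ≤ fhu_w f n m := by
    have hle : ∑ j ∈ range (n - m), fhu_g f j * f m ≤ fhu_w f n m := by
      simp only [fhu_w]
      refine Finset.sum_le_sum fun j hj => ?_
      rcases Nat.eq_zero_or_pos j with rfl | hj1
      · simp
      · exact mul_le_mul_of_nonpos_left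
          (fhu_mono f hf0 hf m (m+j) (by omega)) (fhu_gnonpos f hf0 hf j hj1)
    calc f m * f a = (∑ j ∈ range (a + 1), fhu_g f j) * f m := by
          rw [fhu_gsum f hf0 hf]; ring
      _ = ∑ j ∈ range (n - m), fhu_g f j * f m := by rw [ha, Finset.sum_mul]
      _ ≤ fhu_w f n m := hle
  nlinarith [fhu_pos f hf0 hf m, fhu_pos f hf0 hf a]


omit hf0 hf in
lemma tri_swap (N : ℕ) (F : ℕ → ℕ → ℝ) :
    ∑ j ∈ range N, ∑ l ∈ range (N - j), F j l
      = ∑ l ∈ range N, ∑ j ∈ range (N - l), F j l := by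
  rw [tri_sum N F, tri_sum N (fun l j => F j l)]
  refine Finset.sum_congr rfl fun s hs => ?_
  rw [← Finset.sum_range_reflect (fun l => F l (s - l)) (s+1)]
  refine Finset.sum_congr rfl fun l hl => ?_
  have hls : l ≤ s := by simpa [Nat.lt_succ_iff] using hl
  simp only [show s + 1 - 1 - l = s - l from rfl, Nat.sub_sub_self hls]

omit hf0 hf in
lemma fhu_wpair (n : ℕ) (b c : ℕ → ℝ)
    (hbc : ∀ k : ℕ, k < n → ∑ i ∈ range (k + 1), b i * c (k - i) = 1) :
    ∑ j ∈ range n, ∑ l ∈ range (n - j), fhu_w f n (j + l) * b j * c l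
      = ∑ k ∈ range n, fhu_w f n k := by
  rw [tri_sum n (fun j l => fhu_w f n (j + l) * b j * c l)]
  refine Finset.sum_congr rfl fun s hs => ?_
  have hs' : s < n := Finset.mem_range.mp hs
  have h1 : ∑ l ∈ range (s+1), fhu_w f n ((s - l) + l) * b (s - l) * c l
      = fhu_w f n s * ∑ l ∈ range (s+1), b (s - l) * c l := by
    rw [Finset.mul_sum]
    refine Finset.sum_congr rfl fun l hl => ?_
    have hls : l ≤ s := by simpa [Nat.lt_succ_iff] using hl
    rw [show s - l + l = s by omega]
    ring
  have h2 : ∑ l ∈ range (s+1), b (s - l) * c l = ∑ l ∈ range (s+1), b l * c (s - l) := by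
    rw [← Finset.sum_range_reflect (fun l => b l * c (s - l)) (s+1)]
    refine Finset.sum_congr rfl fun l hl => ?_
    have hls : l ≤ s := by simpa [Nat.lt_succ_iff] using hl
    simp only [show s + 1 - 1 - l = s - l from rfl, Nat.sub_sub_self hls]
  rw [h1, h2, hbc s hs', mul_one]

lemma fhu_lower (n : ℕ) (hn : 1 ≤ n) (b c : ℕ → ℝ)
    (hbc : ∀ k : ℕ, k < n → ∑ i ∈ range (k + 1), b i * c (k - i) = 1) :
    ∑ k ∈ range n, f k ^ 2
      ≤ (∑ k ∈ range n, b k ^ 2 + ∑ k ∈ range n, c k ^ 2) / 2 := by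
  have hA : ∑ k ∈ range n, f k ^ 2 = ∑ k ∈ range n, fhu_w f n k := by
    rw [← fhu_wpair f n f f (fun k _ => fhu_conv f hf0 hf k)]
    refine Finset.sum_congr rfl fun j hj => ?_
    have hj' : j < n := Finset.mem_range.mp hj
    calc f j ^ 2 = f j * ∑ l ∈ range (n - j), fhu_w f n (j + l) * f l := by
          rw [fhu_eigen f hf0 hf n j hj']; ring
      _ = ∑ l ∈ range (n - j), fhu_w f n (j + l) * f j * f l := by
          rw [Finset.mul_sum]
          exact Finset.sum_congr rfl fun l hl => by ring
  have hB : ∑ k ∈ range n, fhu_w f n k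
      = ∑ j ∈ range n, ∑ l ∈ range (n - j), fhu_w f n (j + l) * b j * c l :=
    (fhu_wpair f n b c hbc).symm
  have hC : ∑ j ∈ range n, ∑ l ∈ range (n - j), fhu_w f n (j + l) * b j * c l
      ≤ ∑ j ∈ range n, ∑ l ∈ range (n - j),
          fhu_w f n (j + l) * ((f l / f j) * b j ^ 2 + (f j / f l) * c l ^ 2) / 2 := by
    refine Finset.sum_le_sum fun j hj => Finset.sum_le_sum fun l hl => ?_
    have hl' : j + l < n := by
      have := Finset.mem_range.mp hl; omega
    have hwp := fhu_wnonneg f hf0 hf n (j+l) hl'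
    have hpj := fhu_pos f hf0 hf j
    have hpl := fhu_pos f hf0 hf l
    have hbound : b j * c l ≤ ((f l / f j) * b j ^ 2 + (f j / f l) * c l ^ 2) / 2 := by
      have e1 : (f l / f j) * b j ^ 2 + (f j / f l) * c l ^ 2
          = (f l ^ 2 * b j ^ 2 + f j ^ 2 * c l ^ 2) / (f j * f l) := by
        field_simp
      rw [e1, div_div, le_div_iff₀ (by positivity)]
      nlinarith [sq_nonneg (f l * b j - f j * c l)]
    calc fhu_w f n (j+l) * b j * c l = fhu_w f n (j+l) * (b j * c l) := by ring
      _ ≤ fhu_w f n (j+l) * (((f l / f j) * b j ^ 2 + (f j / f l) * c l ^ 2) / 2) :=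
        mul_le_mul_of_nonneg_left hbound hwp
      _ = fhu_w f n (j+l) * ((f l / f j) * b j ^ 2 + (f j / f l) * c l ^ 2) / 2 := by ring
  have hD1 : ∑ j ∈ range n, ∑ l ∈ range (n - j),
      fhu_w f n (j + l) * ((f l / f j) * b j ^ 2) = ∑ k ∈ range n, b k ^ 2 := by
    refine Finset.sum_congr rfl fun j hj => ?_
    have hj' : j < n := Finset.mem_range.mp hj
    have hfj := (fhu_pos f hf0 hf j).ne'
    calc ∑ l ∈ range (n - j), fhu_w f n (j + l) * ((f l / f j) * b j ^ 2)
        = (b j ^ 2 / f j) * ∑ l ∈ range (n - j), fhu_w f n (j + l) * f l := by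
          rw [Finset.mul_sum]
          exact Finset.sum_congr rfl fun l hl => by ring
      _ = b j ^ 2 := by rw [fhu_eigen f hf0 hf n j hj']; field_simp
  have hD2 : ∑ j ∈ range n, ∑ l ∈ range (n - j),
      fhu_w f n (j + l) * ((f j / f l) * c l ^ 2) = ∑ k ∈ range n, c k ^ 2 := by
    rw [tri_swap n (fun j l => fhu_w f n (j + l) * ((f j / f l) * c l ^ 2))]
    refine Finset.sum_congr rfl fun l hl => ?_
    have hl' : l < n := Finset.mem_range.mp hl
    have hfl := (fhu_pos f hf0 hf l).ne'
    calc ∑ j ∈ range (n - l), fhu_w f n (j + l) * ((f j / f l) * c l ^ 2)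
        = (c l ^ 2 / f l) * ∑ j ∈ range (n - l), fhu_w f n (l + j) * f j := by
          rw [Finset.mul_sum]
          refine Finset.sum_congr rfl fun j hj => ?_
          rw [show j + l = l + j by omega]
          ring
      _ = c l ^ 2 := by rw [fhu_eigen f hf0 hf n l hl']; field_simp
  have hD : ∑ j ∈ range n, ∑ l ∈ range (n - j),
      fhu_w f n (j + l) * ((f l / f j) * b j ^ 2 + (f j / f l) * c l ^ 2) / 2
      = (∑ k ∈ range n, b k ^ 2 + ∑ k ∈ range n, c k ^ 2) / 2 := by
    have hper : ∀ j ∈ range n,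
        ∑ l ∈ range (n - j),
          fhu_w f n (j + l) * ((f l / f j) * b j ^ 2 + (f j / f l) * c l ^ 2) / 2
        = (∑ l ∈ range (n - j), fhu_w f n (j + l) * ((f l / f j) * b j ^ 2)
           + ∑ l ∈ range (n - j), fhu_w f n (j + l) * ((f j / f l) * c l ^ 2)) / 2 := by
      intro j _
      rw [← Finset.sum_add_distrib, ← Finset.sum_div]
      congr 1
      exact Finset.sum_congr rfl fun l _ => by ring
    rw [Finset.sum_congr rfl hper, ← Finset.sum_div, Finset.sum_add_distrib, hD1, hD2]
  calc ∑ k ∈ range n, f k ^ 2 = _ := hA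
    _ = _ := hB
    _ ≤ _ := hC
    _ = _ := hD

end fhu_aux2

/-- Optimality of the Fichtenberger–Henzinger–Upadhyay coefficients: for `b, c ∈ ℝⁿ`
(represented by their first `n` entries) satisfying the constraints
`∑_{i=0}^{k} b i * c (k-i) = 1` for every `0 ≤ k < n`, one has
`‖b‖₂ ‖c‖₂ ≥ ∑_{k<n} (f k)²`; moreover `b = c = f` is feasible and attains equality,
so the minimum of `‖b‖₂ ‖c‖₂` over feasible pairs is exactly `∑_{k<n} (f k)²`. -/
theorem fhu_optimal_lt_toeplitz (n : ℕ) (hn : 1 ≤ n) (f : ℕ → ℝ)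
    (hf0 : f 0 = 1)
    (hf : ∀ k : ℕ, 1 ≤ k → f k = (1 - 1 / (2 * (k : ℝ))) * f (k - 1)) :
    IsLeast
      { v : ℝ | ∃ b c : ℕ → ℝ,
          (∀ k : ℕ, k < n → ∑ i ∈ Finset.range (k + 1), b i * c (k - i) = 1) ∧
          v = Real.sqrt (∑ k ∈ Finset.range n, (b k) ^ 2) *
              Real.sqrt (∑ k ∈ Finset.range n, (c k) ^ 2) }
      (∑ k ∈ Finset.range n, (f k) ^ 2) := by
  constructor
  · refine ⟨f, f, fun k _ => fhu_conv f hf0 hf k, ?_⟩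
    rw [Real.mul_self_sqrt (by positivity)]
  · rintro v ⟨b, c, hbc, rfl⟩
    set B2 := ∑ k ∈ Finset.range n, (b k) ^ 2 with hB2def
    set C2 := ∑ k ∈ Finset.range n, (c k) ^ 2 with hC2def
    have hb0c0 : b 0 * c 0 = 1 := by
      have := hbc 0 hn; simpa using this
    have hb0 : b 0 ≠ 0 := fun h => by simp [h] at hb0c0
    have hc0 : c 0 ≠ 0 := fun h => by simp [h] at hb0c0
    have hB2 : 0 < B2 := by
      have h1 : b 0 ^ 2 ≤ B2 :=
        Finset.single_le_sum (f := fun k => (b k) ^ 2) (fun i _ => sq_nonneg _)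
          (Finset.mem_range.mpr (by omega))
      have h2 : 0 < b 0 ^ 2 := by positivity
      linarith
    have hC2 : 0 < C2 := by
      have h1 : c 0 ^ 2 ≤ C2 :=
        Finset.single_le_sum (f := fun k => (c k) ^ 2) (fun i _ => sq_nonneg _)
          (Finset.mem_range.mpr (by omega))
      have h2 : 0 < c 0 ^ 2 := by positivity
      linarith
    set B := Real.sqrt B2 with hBdef
    set C := Real.sqrt C2 with hCdef
    have hBpos : 0 < B := Real.sqrt_pos.mpr hB2
    have hCpos : 0 < C := Real.sqrt_pos.mpr hC2
    have hBB : B * B = B2 := Real.mul_self_sqrt hB2.le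
    have hCC : C * C = C2 := Real.mul_self_sqrt hC2.le
    set t := Real.sqrt (C / B) with htdef
    have ht : 0 < t := Real.sqrt_pos.mpr (by positivity)
    have ht2 : t ^ 2 = C / B := Real.sq_sqrt (by positivity)
    have hbc' : ∀ k : ℕ, k < n →
        ∑ i ∈ Finset.range (k + 1), (t * b i) * (c (k - i) / t) = 1 := by
      intro k hk
      rw [← hbc k hk]
      refine Finset.sum_congr rfl fun i _ => ?_
      field_simp
    have hlow := fhu_lower f hf0 hf n hn (fun i => t * b i) (fun i => c i / t) hbc'
    have hsum1 : ∑ k ∈ Finset.range n, (t * b k) ^ 2 = t ^ 2 * B2 := by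
      rw [hB2def, Finset.mul_sum]
      exact Finset.sum_congr rfl fun k _ => by ring
    have hsum2 : ∑ k ∈ Finset.range n, (c k / t) ^ 2 = C2 / t ^ 2 := by
      rw [hC2def, Finset.sum_div]
      exact Finset.sum_congr rfl fun k _ => by rw [div_pow]
    rw [hsum1, hsum2, ht2] at hlow
    have harith : (C / B * B2 + C2 / (C / B)) / 2 = B * C := by
      rw [← hBB, ← hCC]
      field_simp
      ring
    linarith [hlow, harith.le, harith.ge]
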